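/- arXiv:1201.3040 — 2 statements merged into one kernel-verified Lean document; each statement's English description precedes it below -/
import Mathlib

section
/- For monomial ideals K_{t,i} of R = A[ℝ≥0^d] (1 ≤ t ≤ l, 1 ≤ i ≤ m_t), the intersection over t of the sums ∑_{i_t} K_{t,i_t} equals the sum over all tuples (i_1,…,i_l) of the intersections ⋂_t K_{t,i_t}. -/
open scoped NNReal ENNReal Pointwise

/-- The semigroup ring `R = A[ℝ≥0 ^ d]`. -/
abbrev SemiRng (A : Type*) [CommRing A] (d : ℕ) : Type _ :=
  AddMonoidAlgebra A (Fin d → ℝ≥0)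

/-- The monomial `X^r` of `A[ℝ≥0 ^ d]`. -/
noncomputable def mono (A : Type*) [CommRing A] {d : ℕ} (r : Fin d → ℝ≥0) : SemiRng A d :=
  AddMonoidAlgebra.single r 1

/-- An ideal of `A[ℝ≥0 ^ d]` is a monomial ideal if it is generated by a set of monomials. -/
def IsMonomialIdeal {A : Type*} [CommRing A] {d : ℕ} (I : Ideal (SemiRng A d)) : Prop :=
  ∃ E : Set (Fin d → ℝ≥0), I = Ideal.span (mono A '' E)

/-- The set of (exponent vectors of) monomials contained in an ideal. -/
def monSet (A : Type*) [CommRing A] {d : ℕ} (I : Ideal (SemiRng A d)) :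
    Set (Fin d → ℝ≥0) :=
  {r | mono A r ∈ I}

/-- `geq e r a` means `r ≥_e a`: `r ≥ a` if `e = 0` (false), `r > a` if `e = 1` (true);
no finite `r` satisfies `r ≥_e ∞`. -/
def geq (e : Bool) (r : ℝ≥0) (a : ℝ≥0∞) : Prop :=
  if e then a < (r : ℝ≥0∞) else a ≤ (r : ℝ≥0∞)

/-- The ideal `J_{i,a,e}` generated by the pure powers `X_i^r` with `r ≥_e a`. -/
noncomputable def Jsingle (A : Type*) [CommRing A] {d : ℕ} (i : Fin d) (a : ℝ≥0∞)
    (e : Bool) : Ideal (SemiRng A d) :=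
  Ideal.span {f | ∃ r : ℝ≥0, geq e r a ∧ f = mono A (Pi.single i r)}

/-- The ideal `J_{a,e}` generated by all pure powers `X_i^r` with `r ≥_{e i} a i`. -/
noncomputable def Jideal (A : Type*) [CommRing A] {d : ℕ} (a : Fin d → ℝ≥0∞)
    (e : Fin d → Bool) : Ideal (SemiRng A d) :=
  Ideal.span {f | ∃ (i : Fin d) (r : ℝ≥0), geq (e i) r (a i) ∧ f = mono A (Pi.single i r)}

/-- The ideal `I_{a,e}` generated by all monomials `X^r` with `r i ≥_{e i} a i` for all `i`. -/
noncomputable def Iideal (A : Type*) [CommRing A] {d : ℕ} (a : Fin d → ℝ≥0∞)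
    (e : Fin d → Bool) : Ideal (SemiRng A d) :=
  Ideal.span {f | ∃ r : Fin d → ℝ≥0, (∀ i, geq (e i) (r i) (a i)) ∧ f = mono A r}

/-- A monomial ideal is m-irreducible if whenever it is an intersection of two monomial
ideals, it equals one of them. -/
def MIrred {A : Type*} [CommRing A] {d : ℕ} (I : Ideal (SemiRng A d)) : Prop :=
  ∀ J K : Ideal (SemiRng A d), IsMonomialIdeal J → IsMonomialIdeal K →
    I = J ⊓ K → I = J ∨ I = K


lemma mem_span_mono_iff {A : Type*} [CommRing A] {d : ℕ} (E : Set (Fin d → ℝ≥0))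
    (f : SemiRng A d) :
    f ∈ Ideal.span (mono A '' E) ↔ ∀ r ∈ f.coeff.support, ∃ e ∈ E, ∃ s, e + s = r := by
  constructor
  · intro hf
    refine Submodule.span_induction ?_ ?_ ?_ ?_ hf
    · rintro _ ⟨e, he, rfl⟩ r hr
      have := Finsupp.support_single_subset hr
      simp only [Finset.mem_singleton] at this
      exact ⟨e, he, 0, by simp [this]⟩
    · intro r hr; simp at hr
    · intro a b _ _ ha hb r hr
      rcases Finset.mem_union.1 (Finsupp.support_add hr) with h | h
      · exact ha r h
      · exact hb r h
    · intro g f _ hf r hr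
      have h2 : r ∈ g.coeff.support + f.coeff.support :=
        AddMonoidAlgebra.support_coeff_mul_subset g f (by simpa [smul_eq_mul] using hr)
      rcases Finset.mem_add.1 h2 with ⟨s, hs, r', hr', rfl⟩
      rcases hf r' hr' with ⟨e, he, s', rfl⟩
      exact ⟨e, he, s + s', by ring⟩
  · intro h
    induction f using AddMonoidAlgebra.induction with
    | zero => exact Ideal.zero_mem _
    | single_add a b f ha hb ih =>
      have hab : a ∈ (AddMonoidAlgebra.single a b + f).coeff.support := by
        rw [Finsupp.mem_support_iff]
        simp [Finsupp.notMem_support_iff.1 ha, hb]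
      obtain ⟨e, he, s, rfl⟩ := h a hab
      have h1 : (AddMonoidAlgebra.single (e + s) b : SemiRng A d) ∈ Ideal.span (mono A '' E) := by
        have : (AddMonoidAlgebra.single (e + s) b : SemiRng A d)
            = mono A e * AddMonoidAlgebra.single s b := by
          rw [mono, AddMonoidAlgebra.single_mul_single, one_mul]
        rw [this]
        exact Ideal.mul_mem_right _ _ (Ideal.subset_span ⟨e, he, rfl⟩)
      refine Ideal.add_mem _ h1 (ih ?_)
      intro r hr
      refine h r ?_
      rcases eq_or_ne r (e + s) with rfl | hne
      · exact hab
      · rw [Finsupp.mem_support_iff] at hr ⊢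
        simpa [Finsupp.single_apply, hne.symm] using hr

lemma mono_mem_span_iff {A : Type*} [CommRing A] [Nontrivial A] {d : ℕ}
    (E : Set (Fin d → ℝ≥0)) (r : Fin d → ℝ≥0) :
    mono A r ∈ Ideal.span (mono A '' E) ↔ ∃ e ∈ E, ∃ s, e + s = r := by
  rw [mem_span_mono_iff]
  constructor
  · intro h
    refine h r ?_
    rw [mono, Finsupp.mem_support_iff, AddMonoidAlgebra.coeff_single, Finsupp.single_eq_same]
    exact one_ne_zero
  · intro h r' hr'
    have := Finsupp.support_single_subset hr'
    simp only [Finset.mem_singleton] at this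
    subst this; exact h

variable {A : Type*} [CommRing A] [Nontrivial A] {d : ℕ}

theorem stmt7 (l : ℕ) (m : Fin l → ℕ) (hm : ∀ t, 1 ≤ m t)
    (K : (t : Fin l) → Fin (m t) → Ideal (SemiRng A d))
    (hK : ∀ t i, IsMonomialIdeal (K t i)) :
    (⨅ t, ⨆ i, K t i) = ⨆ c : (t : Fin l) → Fin (m t), ⨅ t, K t (c t) := by
  apply le_antisymm
  · choose E hE using fun t i => hK t i
    intro f hf
    have hsup : ∀ t : Fin l, (⨆ i, K t i) = Ideal.span (mono A '' ⋃ i, E t i) := by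
      intro t
      rw [Set.image_iUnion, Ideal.span_iUnion]
      exact iSup_congr fun i => hE t i
    have hmem : ∀ t : Fin l, ∀ r ∈ f.coeff.support, ∃ i, mono A r ∈ K t i := by
      intro t r hr
      have hf' : f ∈ ⨆ i, K t i := (Submodule.mem_iInf _).1 hf t
      rw [hsup t] at hf'
      obtain ⟨e, he, s, hs⟩ := (mem_span_mono_iff _ f).1 hf' r hr
      rw [Set.mem_iUnion] at he
      obtain ⟨i, hi⟩ := he
      exact ⟨i, (hE t i) ▸ (mono_mem_span_iff _ r).2 ⟨e, hi, s, hs⟩⟩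
    have hf_eq : f = ∑ r ∈ f.coeff.support, (AddMonoidAlgebra.single r (f.coeff r) : SemiRng A d) := by
      exact (AddMonoidAlgebra.sum_coeff_single f).symm
    rw [hf_eq]
    apply Submodule.sum_mem
    intro r hr
    choose c hc using fun t => hmem t r hr
    have hterm : (AddMonoidAlgebra.single r (f.coeff r) : SemiRng A d) ∈ ⨅ t, K t (c t) := by
      rw [Submodule.mem_iInf]
      intro t
      have : (AddMonoidAlgebra.single r (f.coeff r) : SemiRng A d)
          = AddMonoidAlgebra.single 0 (f.coeff r) * mono A r := by
        rw [mono, AddMonoidAlgebra.single_mul_single, zero_add, mul_one]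
      rw [this]
      exact Ideal.mul_mem_left _ _ (hc t)
    exact (le_iSup (fun c : (t : Fin l) → Fin (m t) => ⨅ t, K t (c t)) c) hterm
  · apply iSup_le
    intro c
    apply le_iInf
    intro t
    exact (iInf_le _ t).trans (le_iSup _ (c t))
end

section
/- In A[ℝ≥0^2], the monomial ideal I = ({X^r Y^{1−r} : 0 ≤ r ≤ 1})R cannot be written as a finite sum of ideals of the form I_{α,ε}, and hence admits no finite m-irreducible decomposition. -/
open scoped NNReal ENNReal

section Aux

lemma xle (k j : ℕ) (hj : j ≤ k+1) : (j:ℝ≥0)/((k:ℝ≥0)+1) ≤ 1 := by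
  rw [div_le_one (by positivity)]
  exact_mod_cast hj

lemma xlt (k : ℕ) {i j : ℕ} (hij : i < j) : (i:ℝ≥0)/((k:ℝ≥0)+1) < (j:ℝ≥0)/((k:ℝ≥0)+1) := by
  gcongr

lemma xmono (k : ℕ) {i j : ℕ} (hij : i ≤ j) : (i:ℝ≥0)/((k:ℝ≥0)+1) ≤ (j:ℝ≥0)/((k:ℝ≥0)+1) := by
  gcongr

variable {A : Type*} [CommRing A] [Nontrivial A] {d : ℕ}

omit [Nontrivial A] in
lemma memM {E : Set (Fin d → ℝ≥0)} {f : SemiRng A d} :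
    f ∈ Ideal.span (mono A '' E) ↔ ∀ m ∈ f.coeff.support, ∃ s ∈ E, s ≤ m := by
  have himg : mono A '' E = AddMonoidAlgebra.of' A (Fin d → ℝ≥0) '' E := rfl
  rw [himg, AddMonoidAlgebra.mem_ideal_span_of'_image]
  refine forall₂_congr fun m hm => exists_congr fun s => and_congr_right fun _ => ?_
  rw [le_iff_exists_add']

omit [Nontrivial A] in
lemma mono_mul (r s : Fin d → ℝ≥0) : mono A r * mono A s = mono A (r + s) := by
  simp [mono, AddMonoidAlgebra.single_mul_single]

lemma memL {E : Set (Fin d → ℝ≥0)} {r : Fin d → ℝ≥0} :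
    mono A r ∈ Ideal.span (mono A '' E) ↔ ∃ s ∈ E, s ≤ r := by
  rw [memM]
  have hsupp : (mono A r).coeff.support = {r} := Finsupp.support_single_ne_zero r one_ne_zero
  rw [hsupp]
  simp

omit [Nontrivial A] in
lemma mono_mem_of_le {J : Ideal (SemiRng A d)} {r r' : Fin d → ℝ≥0}
    (h : r ≤ r') (hr : mono A r ∈ J) : mono A r' ∈ J := by
  have : mono A r' = mono A (r' - r) * mono A r := by
    rw [mono_mul, tsub_add_cancel_of_le h]
  rw [this]; exact J.mul_mem_left _ hr

lemma le_two_vec {u v u' v' : ℝ≥0} (h0 : u ≤ u') (h1 : v ≤ v') :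
    (![u, v] : Fin 2 → ℝ≥0) ≤ ![u', v'] := by
  intro i
  fin_cases i <;> simpa

/-- An m-irreducible monomial ideal containing a monomial contains one of its pure powers. -/
lemma mirred_pure {J : Ideal (SemiRng A 2)} (hm : IsMonomialIdeal J) (hi : MIrred J)
    {p : Fin 2 → ℝ≥0} (hp : mono A p ∈ J) :
    mono A ![p 0, 0] ∈ J ∨ mono A ![0, p 1] ∈ J := by
  by_contra hcon
  push_neg at hcon
  obtain ⟨h1, h2⟩ := hcon
  obtain ⟨E, rfl⟩ := hm
  set m1 : Fin 2 → ℝ≥0 := ![p 0, 0] with hm1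
  set m2 : Fin 2 → ℝ≥0 := ![0, p 1] with hm2
  have key : Ideal.span (mono A '' E) =
      Ideal.span (mono A '' (E ∪ {m1})) ⊓ Ideal.span (mono A '' (E ∪ {m2})) := by
    refine le_antisymm (le_inf (Ideal.span_mono (Set.image_mono Set.subset_union_left))
      (Ideal.span_mono (Set.image_mono Set.subset_union_left))) ?_
    intro f hf
    rw [memM]
    intro m hmem
    obtain ⟨s, hs, hsle⟩ := memM.mp hf.1 m hmem
    rcases hs with hs | hs
    · exact ⟨s, hs, hsle⟩
    obtain ⟨s', hs', hsle'⟩ := memM.mp hf.2 m hmem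
    rcases hs' with hs' | hs'
    · exact ⟨s', hs', hsle'⟩
    have hpm : p ≤ m := by
      intro i
      fin_cases i
      · have := hsle 0
        rw [Set.mem_singleton_iff.mp hs] at this
        simpa [hm1] using this
      · have := hsle' 1
        rw [Set.mem_singleton_iff.mp hs'] at this
        simpa [hm2] using this
    obtain ⟨u, hu, hule⟩ := memL.mp hp
    exact ⟨u, hu, hule.trans hpm⟩
  rcases hi _ _ ⟨_, rfl⟩ ⟨_, rfl⟩ key with h | h
  · exact h1 (h ▸ Ideal.subset_span ⟨m1, Or.inr rfl, rfl⟩)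
  · exact h2 (h ▸ Ideal.subset_span ⟨m2, Or.inr rfl, rfl⟩)

lemma arith_contra {u v : ℝ≥0} (huv : u < v) (hv : v ≤ 1) (h : (1:ℝ≥0) ≤ u + (1 - v)) : False := by
  have hlt : u + (1 - v) < v + (1 - v) := by
    exact add_lt_add_of_lt_of_le huv le_rfl
  rw [add_tsub_cancel_of_le hv] at hlt
  exact absurd (h.trans_lt hlt) (lt_irrefl _)

lemma geq_mono {e : Bool} {r r' : ℝ≥0} {a : ℝ≥0∞} (h : r ≤ r') (hg : geq e r a) : geq e r' a := by
  cases e <;> simp only [geq, if_true, if_false, Bool.false_eq_true] at *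
  · exact hg.trans (ENNReal.coe_le_coe.mpr h)
  · exact hg.trans_le (ENNReal.coe_le_coe.mpr h)

end Aux

variable {A : Type*} [CommRing A] [Nontrivial A] {d : ℕ}

theorem stmt18 :
    (¬ ∃ (k : ℕ) (a : Fin k → Fin 2 → ℝ≥0∞) (e : Fin k → Fin 2 → Bool),
        Ideal.span (mono A '' {p : Fin 2 → ℝ≥0 | p 0 + p 1 = 1}) =
          ⨆ t, Iideal A (a t) (e t)) ∧
      (¬ ∃ (k : ℕ) (J : Fin k → Ideal (SemiRng A 2)),
        (∀ t, IsMonomialIdeal (J t)) ∧ (∀ t, MIrred (J t)) ∧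
          Ideal.span (mono A '' {p : Fin 2 → ℝ≥0 | p 0 + p 1 = 1}) = ⨅ t, J t) := by
  set E : Set (Fin 2 → ℝ≥0) := {p | p 0 + p 1 = 1} with hEdef
  have hbmem : ∀ u : ℝ≥0, u ≤ 1 → mono A ![u, 1-u] ∈ Ideal.span (mono A '' E) := by
    intro u hu
    refine Ideal.subset_span ⟨![u, 1-u], ?_, rfl⟩
    show (![u, 1-u] : Fin 2 → ℝ≥0) 0 + (![u, 1-u] : Fin 2 → ℝ≥0) 1 = 1
    simp [add_tsub_cancel_of_le hu]
  constructor
  · rintro ⟨k, a, e, heq⟩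
    set S : Fin k → Set (Fin 2 → ℝ≥0) := fun t => {r | ∀ i, geq (e t i) (r i) (a t i)} with hS
    have hIid : ∀ t, Iideal A (a t) (e t) = Ideal.span (mono A '' S t) := by
      intro t
      unfold Iideal
      congr 1
      ext f
      constructor
      · rintro ⟨r, hr, rfl⟩; exact ⟨r, hr, rfl⟩
      · rintro ⟨r, hr, rfl⟩; exact ⟨r, hr, rfl⟩
    have hsup : (⨆ t, Iideal A (a t) (e t)) = Ideal.span (mono A '' ⋃ t, S t) := by
      rw [Set.image_iUnion]
      rw [show Ideal.span (⋃ t, mono A '' S t) = ⨆ t, Ideal.span (mono A '' S t) from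
        Submodule.span_iUnion _]
      exact iSup_congr hIid
    have hcover : ∀ u : ℝ≥0, u ≤ 1 → ∃ t, (![u, 1-u] : Fin 2 → ℝ≥0) ∈ S t := by
      intro u hu
      have h := hbmem u hu
      rw [heq, hsup, memL] at h
      obtain ⟨s, hs, hsle⟩ := h
      rw [Set.mem_iUnion] at hs
      obtain ⟨t, hst⟩ := hs
      exact ⟨t, fun i => geq_mono (hsle i) (hst i)⟩
    have huniq : ∀ (u v : ℝ≥0), u < v → v ≤ 1 → ∀ t, (![u, 1-u] : Fin 2 → ℝ≥0) ∈ S t →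
        (![v, 1-v] : Fin 2 → ℝ≥0) ∈ S t → False := by
      intro u v huv hv t htu htv
      have hz : (![u, 1-v] : Fin 2 → ℝ≥0) ∈ S t := by
        intro i
        fin_cases i
        · simpa using htu 0
        · simpa using htv 1
      have hzmem : mono A ![u, 1-v] ∈ Ideal.span (mono A '' E) := by
        rw [heq]
        have hmem : mono A ![u, 1-v] ∈ Iideal A (a t) (e t) := by
          rw [hIid t]
          exact Ideal.subset_span ⟨_, hz, rfl⟩
        exact le_iSup (fun t => Iideal A (a t) (e t)) t hmem
      rw [memL] at hzmem
      obtain ⟨s, hsE, hsle⟩ := hzmem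
      refine arith_contra huv hv ?_
      have hsE' : s 0 + s 1 = 1 := hsE
      have h01 : s 0 + s 1 ≤ u + (1-v) :=
        add_le_add (by simpa using hsle 0) (by simpa using hsle 1)
      rw [hsE'] at h01
      exact h01
    set x : ℕ → ℝ≥0 := fun j => (j:ℝ≥0)/((k:ℝ≥0)+1) with hx
    have hxle : ∀ j : Fin (k+1), x (j:ℕ) ≤ 1 := fun j => xle k _ j.2.le
    have g : ∀ j : Fin (k+1), ∃ t, (![x (j:ℕ), 1 - x (j:ℕ)] : Fin 2 → ℝ≥0) ∈ S t :=
      fun j => hcover _ (hxle j)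
    choose gf hgf using g
    have hginj : Function.Injective gf := by
      intro i j hij
      by_contra hne
      have hne' : (i:ℕ) ≠ (j:ℕ) := fun h => hne (Fin.ext h)
      rcases hne'.lt_or_gt with h | h
      · exact huniq _ _ (xlt k h) (hxle j) (gf j) (hij ▸ hgf i) (hgf j)
      · exact huniq _ _ (xlt k h) (hxle i) (gf i) (hij.symm ▸ hgf j) (hgf i)
    have hcard := Fintype.card_le_of_injective gf hginj
    simp at hcard
  · rintro ⟨k, J, hmon, hirr, heq⟩
    have hJI : ∀ t, Ideal.span (mono A '' E) ≤ J t := by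
      intro t
      rw [heq]
      exact iInf_le _ t
    have hcov : ∀ u : ℝ≥0, u ≤ 1 → ∀ t, mono A ![u, 0] ∈ J t ∨ mono A ![0, 1-u] ∈ J t := by
      intro u hu t
      have hp : mono A ![u, 1-u] ∈ J t := hJI t (hbmem u hu)
      have h := mirred_pure (hmon t) (hirr t) hp
      simpa using h
    set x : ℕ → ℝ≥0 := fun j => (j:ℝ≥0)/((k:ℝ≥0)+1) with hx
    have hgood : ∃ j : Fin (k+1), ∀ t,
        mono A ![x (j:ℕ), 0] ∈ J t ∨ mono A ![0, 1 - x ((j:ℕ)+1)] ∈ J t := by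
      by_contra hbad
      push_neg at hbad
      choose g hg1 hg2 using hbad
      have hA : ∀ j : Fin (k+1), mono A ![x ((j:ℕ)+1), 0] ∈ J (g j) := by
        intro j
        rcases hcov (x ((j:ℕ)+1)) (xle k _ j.2) (g j) with h | h
        · exact h
        · exact absurd h (hg2 j)
      have hginj : Function.Injective g := by
        intro i j hij
        by_contra hne
        have hne' : (i:ℕ) ≠ (j:ℕ) := fun h => hne (Fin.ext h)
        rcases hne'.lt_or_gt with h | h
        · exact hg1 j (mono_mem_of_le (le_two_vec (xmono k h) le_rfl) (hij ▸ hA i))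
        · exact hg1 i (mono_mem_of_le (le_two_vec (xmono k h) le_rfl) (hij.symm ▸ hA j))
      have hcard := Fintype.card_le_of_injective g hginj
      simp at hcard
    obtain ⟨j, hj⟩ := hgood
    have hz : mono A ![x (j:ℕ), 1 - x ((j:ℕ)+1)] ∈ Ideal.span (mono A '' E) := by
      rw [heq, Ideal.mem_iInf]
      intro t
      rcases hj t with h | h
      · exact mono_mem_of_le (le_two_vec le_rfl zero_le) h
      · exact mono_mem_of_le (le_two_vec zero_le le_rfl) h
    rw [memL] at hz
    obtain ⟨s, hsE, hsle⟩ := hz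
    refine arith_contra (xlt k (Nat.lt_succ_self (j:ℕ))) (xle k _ j.2) ?_
    have hsE' : s 0 + s 1 = 1 := hsE
    have h01 : s 0 + s 1 ≤ x (j:ℕ) + (1 - x ((j:ℕ)+1)) :=
      add_le_add (by simpa using hsle 0) (by simpa using hsle 1)
    rw [hsE'] at h01
    exact h01
end
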